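/- Let H be symmetric n×n with H ⪰ δ·I (δ > 0), 𝒯, ℳ, 𝒩 symmetric tensors of orders 3, 4, 5 on ℝⁿ, σ ≥ 0, and suppose m(s) = f₀ + gᵀs + (1/2)H[s]² + (1/6)𝒯[s]³ + (1/24)ℳ[s]⁴ + (1/120)𝒩[s]⁵ + (σ/6)∥s∥⁶ is convex. If s* satisfies ∇m(s*) = 0 and 𝒩[s*]⁵ ≥ 0, then f₀ − T₅(s*) ≥ (δ/18)·∥s*∥², where T₅ is the quintic Taylor part f₀ + gᵀs + (1/2)H[s]² + (1/6)𝒯[s]³ + (1/24)ℳ[s]⁴ + (1/120)𝒩[s]⁵. -/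

import Mathlib

set_option maxHeartbeats 1000000


open scoped InnerProductSpace

/-- If `A + B t + C t² ≥ 0` for all `t > 0`, then `A ≥ 0`. -/
lemma aux_quad_nonneg (A B C : ℝ) (h : ∀ t : ℝ, 0 < t → 0 ≤ A + B * t + C * t ^ 2) :
    0 ≤ A := by
  by_contra hA
  push_neg at hA
  set D : ℝ := |B| + |C| + 1 with hD
  have hD1 : 0 < D := by positivity
  set t : ℝ := min 1 (-A / D) with ht
  have ht0 : 0 < t := lt_min one_pos (div_pos (neg_pos.mpr hA) hD1)
  have ht1 : t ≤ 1 := min_le_left _ _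
  have ht2 : t ≤ -A / D := min_le_right _ _
  have hDt : D * t ≤ -A := by
    rw [ht]
    calc D * min 1 (-A / D) ≤ D * (-A / D) :=
          mul_le_mul_of_nonneg_left (min_le_right _ _) hD1.le
    _ = -A := by rw [mul_comm]; exact div_mul_cancel₀ (-A) hD1.ne'
  have h1 := h t ht0
  have hB : B * t ≤ |B| * t := mul_le_mul_of_nonneg_right (le_abs_self B) ht0.le
  have hC2 : C * t ^ 2 ≤ |C| * t ^ 2 := by
    have := mul_le_mul_of_nonneg_right (le_abs_self C) (sq_nonneg t)
    simpa using this
  have hC3 : |C| * t ^ 2 ≤ |C| * t := by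
    have : t ^ 2 ≤ t := by nlinarith
    exact mul_le_mul_of_nonneg_left this (abs_nonneg C)
  nlinarith [abs_nonneg B, abs_nonneg C]

/-- If `A u² + B u⁴ + C u⁶ ≥ 0` for all `u`, then `A ≥ 0`. -/
lemma aux_even_nonneg (A B C : ℝ) (h : ∀ u : ℝ, 0 ≤ A * u ^ 2 + B * u ^ 4 + C * u ^ 6) :
    0 ≤ A := by
  apply aux_quad_nonneg A B C
  intro t ht
  have h1 := h (Real.sqrt t)
  have hs : Real.sqrt t ^ 2 = t := Real.sq_sqrt ht.le
  have h4 : Real.sqrt t ^ 4 = t ^ 2 := by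
    rw [show (4 : ℕ) = 2 * 2 by norm_num, pow_mul, hs]
  have h6 : Real.sqrt t ^ 6 = t ^ 3 := by
    rw [show (6 : ℕ) = 2 * 3 by norm_num, pow_mul, hs]
  rw [hs, h4, h6] at h1
  nlinarith [h1, ht]

/-- Improved decrease bound for `p = 5` (Scenario I): if `H ⪰ δI`, the sextically
regularized quintic model is convex, `∇m(s*) = 0` and `𝒩[s*]⁵ ≥ 0`, then
`f₀ - T₅(s*) ≥ (δ/18)‖s*‖²`. -/
theorem quintic_model_improved_decrease {n : ℕ} (f₀ σ δ : ℝ) (hσ : 0 ≤ σ) (hδ : 0 < δ)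
    (g sstar : EuclideanSpace ℝ (Fin n))
    (H : EuclideanSpace ℝ (Fin n) →L[ℝ] EuclideanSpace ℝ (Fin n))
    (hHsym : ∀ u v, ⟪H u, v⟫_ℝ = ⟪u, H v⟫_ℝ)
    (hHpos : ∀ v, ⟪v, H v⟫_ℝ ≥ δ * ‖v‖ ^ 2)
    (T3 : ContinuousMultilinearMap ℝ (fun _ : Fin 3 => EuclideanSpace ℝ (Fin n)) ℝ)
    (hT3sym : ∀ (v : Fin 3 → EuclideanSpace ℝ (Fin n)) (e : Equiv.Perm (Fin 3)),
      T3 (v ∘ e) = T3 v)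
    (M4 : ContinuousMultilinearMap ℝ (fun _ : Fin 4 => EuclideanSpace ℝ (Fin n)) ℝ)
    (hM4sym : ∀ (v : Fin 4 → EuclideanSpace ℝ (Fin n)) (e : Equiv.Perm (Fin 4)),
      M4 (v ∘ e) = M4 v)
    (N5 : ContinuousMultilinearMap ℝ (fun _ : Fin 5 => EuclideanSpace ℝ (Fin n)) ℝ)
    (hN5sym : ∀ (v : Fin 5 → EuclideanSpace ℝ (Fin n)) (e : Equiv.Perm (Fin 5)),
      N5 (v ∘ e) = N5 v)
    (hconv : ConvexOn ℝ Set.univ (fun s : EuclideanSpace ℝ (Fin n) =>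
      f₀ + ⟪g, s⟫_ℝ + (1 / 2) * ⟪s, H s⟫_ℝ + (1 / 6) * T3 (fun _ => s)
        + (1 / 24) * M4 (fun _ => s) + (1 / 120) * N5 (fun _ => s)
        + σ / 6 * ‖s‖ ^ 6))
    (hgrad : ∀ v, ⟪g, v⟫_ℝ + ⟪H sstar, v⟫_ℝ + (1 / 2) * T3 ![sstar, sstar, v]
      + (1 / 6) * M4 ![sstar, sstar, sstar, v]
      + (1 / 24) * N5 ![sstar, sstar, sstar, sstar, v]
      + σ * ‖sstar‖ ^ 4 * ⟪sstar, v⟫_ℝ = 0)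
    (hN : N5 (fun _ => sstar) ≥ 0) :
    f₀ - (f₀ + ⟪g, sstar⟫_ℝ + (1 / 2) * ⟪sstar, H sstar⟫_ℝ
        + (1 / 6) * T3 (fun _ => sstar) + (1 / 24) * M4 (fun _ => sstar)
        + (1 / 120) * N5 (fun _ => sstar))
      ≥ δ / 18 * ‖sstar‖ ^ 2 := by
  set G : ℝ := ⟪g, sstar⟫_ℝ with hG
  set a : ℝ := ⟪sstar, H sstar⟫_ℝ with ha
  set t3 : ℝ := T3 (fun _ => sstar) with ht3
  set m4 : ℝ := M4 (fun _ => sstar) with hm4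
  set n5 : ℝ := N5 (fun _ => sstar) with hn5
  set s6 : ℝ := σ * ‖sstar‖ ^ 6 with hs6
  -- scaling of each term
  have hT3s : ∀ τ : ℝ, T3 (fun _ => τ • sstar) = τ ^ 3 * t3 := by
    intro τ
    have := T3.map_smul_univ (fun _ => τ) (fun _ => sstar)
    simpa [Finset.prod_const, smul_eq_mul] using this
  have hM4s : ∀ τ : ℝ, M4 (fun _ => τ • sstar) = τ ^ 4 * m4 := by
    intro τ
    have := M4.map_smul_univ (fun _ => τ) (fun _ => sstar)
    simpa [Finset.prod_const, smul_eq_mul] using this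
  have hN5s : ∀ τ : ℝ, N5 (fun _ => τ • sstar) = τ ^ 5 * n5 := by
    intro τ
    have := N5.map_smul_univ (fun _ => τ) (fun _ => sstar)
    simpa [Finset.prod_const, smul_eq_mul] using this
  have hinner : ∀ τ : ℝ, ⟪g, τ • sstar⟫_ℝ = τ * G := by
    intro τ; rw [real_inner_smul_right]
  have hHs : ∀ τ : ℝ, ⟪τ • sstar, H (τ • sstar)⟫_ℝ = τ ^ 2 * a := by
    intro τ
    rw [map_smul, real_inner_smul_left, real_inner_smul_right]
    ring
  have hnorm : ∀ τ : ℝ, ‖τ • sstar‖ ^ 6 = τ ^ 6 * ‖sstar‖ ^ 6 := by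
    intro τ
    rw [norm_smul]
    have : |τ| ^ 6 = τ ^ 6 := by
      rw [show (6 : ℕ) = 2 * 3 by norm_num, pow_mul, pow_mul, sq_abs]
    simp [mul_pow, Real.norm_eq_abs, this]
  -- value of the model along the line
  have hval : ∀ τ : ℝ,
      (f₀ + ⟪g, τ • sstar⟫_ℝ + (1 / 2) * ⟪τ • sstar, H (τ • sstar)⟫_ℝ
        + (1 / 6) * T3 (fun _ => τ • sstar) + (1 / 24) * M4 (fun _ => τ • sstar)
        + (1 / 120) * N5 (fun _ => τ • sstar) + σ / 6 * ‖τ • sstar‖ ^ 6)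
      = f₀ + G * τ + (a / 2) * τ ^ 2 + (t3 / 6) * τ ^ 3 + (m4 / 24) * τ ^ 4
        + (n5 / 120) * τ ^ 5 + (s6 / 6) * τ ^ 6 := by
    intro τ
    rw [hinner τ, hHs τ, hT3s τ, hM4s τ, hN5s τ, hnorm τ, hs6]
    ring
  -- convexity along the line
  have hline : ConvexOn ℝ Set.univ (fun τ : ℝ =>
      f₀ + ⟪g, τ • sstar⟫_ℝ + (1 / 2) * ⟪τ • sstar, H (τ • sstar)⟫_ℝ
        + (1 / 6) * T3 (fun _ => τ • sstar) + (1 / 24) * M4 (fun _ => τ • sstar)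
        + (1 / 120) * N5 (fun _ => τ • sstar) + σ / 6 * ‖τ • sstar‖ ^ 6) := by
    have := hconv.comp_affineMap
      ((LinearMap.toSpanSingleton ℝ (EuclideanSpace ℝ (Fin n)) sstar).toAffineMap)
    simpa only [Function.comp_def, Set.preimage_univ, LinearMap.coe_toAffineMap,
      LinearMap.toSpanSingleton_apply] using this
  have hpoly : ConvexOn ℝ Set.univ (fun τ : ℝ =>
      f₀ + G * τ + (a / 2) * τ ^ 2 + (t3 / 6) * τ ^ 3 + (m4 / 24) * τ ^ 4
        + (n5 / 120) * τ ^ 5 + (s6 / 6) * τ ^ 6) := by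
    have : (fun τ : ℝ =>
        f₀ + ⟪g, τ • sstar⟫_ℝ + (1 / 2) * ⟪τ • sstar, H (τ • sstar)⟫_ℝ
          + (1 / 6) * T3 (fun _ => τ • sstar) + (1 / 24) * M4 (fun _ => τ • sstar)
          + (1 / 120) * N5 (fun _ => τ • sstar) + σ / 6 * ‖τ • sstar‖ ^ 6)
        = (fun τ : ℝ => f₀ + G * τ + (a / 2) * τ ^ 2 + (t3 / 6) * τ ^ 3
          + (m4 / 24) * τ ^ 4 + (n5 / 120) * τ ^ 5 + (s6 / 6) * τ ^ 6) := funext hval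
    rwa [this] at hline
  -- midpoint inequality around 3/4
  have hmid : ∀ u : ℝ, 0 ≤
      (a + (3 / 4) * t3 + (9 / 32) * m4 + (9 / 128) * n5 + (405 / 256) * s6) * u ^ 2
      + (m4 / 12 + n5 / 16 + (45 / 16) * s6) * u ^ 4 + (s6 / 3) * u ^ 6 := by
    intro u
    have h2 := hpoly.2 (Set.mem_univ (3 / 4 + u)) (Set.mem_univ (3 / 4 - u))
      (by norm_num : (0:ℝ) ≤ 1 / 2) (by norm_num : (0:ℝ) ≤ 1 / 2) (by norm_num)
    simp only [smul_eq_mul] at h2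
    have harg : (1 / 2 : ℝ) * (3 / 4 + u) + 1 / 2 * (3 / 4 - u) = 3 / 4 := by ring
    rw [harg] at h2
    nlinarith [h2]
  have hA : 0 ≤ a + (3 / 4) * t3 + (9 / 32) * m4 + (9 / 128) * n5 + (405 / 256) * s6 :=
    aux_even_nonneg _ _ _ hmid
  -- first-order condition at sstar
  have hfirst : G + a + (1 / 2) * t3 + (1 / 6) * m4 + (1 / 24) * n5 + s6 = 0 := by
    have h1 := hgrad sstar
    have e3 : T3 ![sstar, sstar, sstar] = t3 := by
      rw [ht3]; congr 1; funext i; fin_cases i <;> rfl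
    have e4 : M4 ![sstar, sstar, sstar, sstar] = m4 := by
      rw [hm4]; congr 1; funext i; fin_cases i <;> rfl
    have e5 : N5 ![sstar, sstar, sstar, sstar, sstar] = n5 := by
      rw [hn5]; congr 1; funext i; fin_cases i <;> rfl
    have eH : ⟪H sstar, sstar⟫_ℝ = a := by rw [ha, hHsym]
    have eI : ⟪sstar, sstar⟫_ℝ = ‖sstar‖ ^ 2 := real_inner_self_eq_norm_sq sstar
    rw [e3, e4, e5, eH, eI] at h1
    rw [hG, hs6]
    nlinarith [h1]
  have hpos : a ≥ δ * ‖sstar‖ ^ 2 := hHpos sstar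
  have hs6nn : 0 ≤ s6 := by rw [hs6]; positivity
  linarith [hA, hfirst, hpos, hs6nn, hN]
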